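/- For w in the extended affine symmetric group, the sign insertion process starting from (0, ∅, ∅, [w(1),…,w(n)]) terminates after finitely many steps with an empty last component, defining sgn_𝔓(w) and sgn_𝔔(w); moreover sgn_𝔓(w) and sgn_𝔔(w) are strictly increasing words of length n. -/

import Mathlib

/-- One step of Blasiak's sign insertion, acting on states
`(counter, 𝔓, 𝔔, remaining word)`. -/
def signStep (n : ℕ) : ℤ × List ℤ × List ℤ × List ℤ → ℤ × List ℤ × List ℤ × List ℤ
  | (c, P, Q, []) => (c, P, Q, [])
  | (c, P, Q, a :: w) =>
    if ∀ p ∈ P, p < a then (c + 1, P ++ [a], Q ++ [c + 1], w)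
    else
      match P.find? (fun p => decide (a < p)) with
      | some b => (c + 1, P.map (fun x => if x = b then a else x), Q, w ++ [(n : ℤ) + b])
      | none => (c, P, Q, [])

namespace SignAux

/-- number of entries of `P` exceeding `x` -/
def cnt (P : List ℤ) (x : ℤ) : ℕ := (P.filter (fun p => x < p)).length

def phi (P t : List ℤ) : ℕ := (t.map (cnt P)).sum

/-- termination measure -/
def meas (n : ℕ) (s : ℤ × List ℤ × List ℤ × List ℤ) : ℕ :=
  s.2.2.2.length * (n * n + 1) + phi s.2.1 s.2.2.2

/-- the invariant -/
def Inv (n : ℕ) (s : ℤ × List ℤ × List ℤ × List ℤ) : Prop :=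
  s.2.1.length + s.2.2.2.length = n ∧
  ((s.2.1 ++ s.2.2.2).map (· % (n : ℤ))).Nodup ∧
  s.2.1.Pairwise (· < ·) ∧
  s.2.2.1.Pairwise (· < ·) ∧
  s.2.2.1.length = s.2.1.length ∧
  ∀ q ∈ s.2.2.1, q ≤ s.1

lemma cnt_append (l1 l2 : List ℤ) (x : ℤ) : cnt (l1 ++ l2) x = cnt l1 x + cnt l2 x := by
  simp [cnt, List.filter_append]

lemma cnt_cons (a : ℤ) (l : List ℤ) (x : ℤ) :
    cnt (a :: l) x = (if x < a then 1 else 0) + cnt l x := by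
  unfold cnt
  rw [List.filter_cons]
  by_cases h : x < a
  · simp [h, Nat.add_comm]
  · simp [h]

lemma cnt_le_length (P : List ℤ) (x : ℤ) : cnt P x ≤ P.length :=
  List.length_filter_le _ _

lemma cnt_anti (P : List ℤ) {x y : ℤ} (h : x ≤ y) : cnt P y ≤ cnt P x := by
  induction P with
  | nil => simp [cnt]
  | cons a l ih =>
    rw [cnt_cons, cnt_cons]
    have : (if y < a then 1 else 0) ≤ (if x < a then 1 else 0) := by
      split <;> split <;> omega
    omega

lemma phi_cons (P : List ℤ) (a : ℤ) (t : List ℤ) : phi P (a :: t) = cnt P a + phi P t := by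
  simp [phi]

lemma phi_append (P : List ℤ) (t1 t2 : List ℤ) :
    phi P (t1 ++ t2) = phi P t1 + phi P t2 := by
  simp [phi]

lemma phi_le (P t : List ℤ) : phi P t ≤ t.length * P.length := by
  induction t with
  | nil => simp [phi]
  | cons a l ih =>
    rw [phi_cons]
    have := cnt_le_length P a
    simp only [List.length_cons]
    nlinarith

lemma phi_mono (P P' : List ℤ) (t : List ℤ) (h : ∀ x, cnt P' x ≤ cnt P x) :
    phi P' t ≤ phi P t := by
  induction t with
  | nil => simp [phi]
  | cons a l ih => rw [phi_cons, phi_cons]; exact Nat.add_le_add (h a) ih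

/-- structure of a successful find? -/
lemma find?_structure {p : ℤ → Bool} {l : List ℤ} {b : ℤ} (h : l.find? p = some b) :
    ∃ l1 l2, l = l1 ++ b :: l2 ∧ (∀ x ∈ l1, p x = false) ∧ p b = true := by
  induction l with
  | nil => simp at h
  | cons a l ih =>
    by_cases hpa : p a = true
    · rw [List.find?_cons_of_pos hpa] at h
      obtain rfl : a = b := Option.some_inj.mp h
      exact ⟨[], l, rfl, by simp, hpa⟩
    · rw [List.find?_cons_of_neg hpa] at h
      obtain ⟨l1, l2, rfl, h1, h2⟩ := ih h
      exact ⟨a :: l1, l2, rfl, by simpa [hpa] using h1, h2⟩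


lemma signStep_nil (n : ℕ) (c : ℤ) (P Q : List ℤ) :
    signStep n (c, P, Q, []) = (c, P, Q, []) := rfl

lemma map_eq_self {f : ℤ → ℤ} {l : List ℤ} (h : ∀ x ∈ l, f x = x) : l.map f = l := by
  induction l with
  | nil => rfl
  | cons a t ih => simp only [List.map_cons, h a (by simp), ih (fun x hx => h x (by simp [hx]))]

lemma step_main (n : ℕ) (hn : 0 < n) (s : ℤ × List ℤ × List ℤ × List ℤ)
    (hInv : Inv n s) (hne : s.2.2.2 ≠ []) :
    Inv n (signStep n s) ∧ meas n (signStep n s) < meas n s := by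
  obtain ⟨c, P, Q, word⟩ := s
  cases word with
  | nil => simp at hne
  | cons a t =>
  obtain ⟨hlen, hnd, hPs, hQs, hQlen, hQc⟩ := hInv
  simp only at hlen hnd hPs hQs hQlen hQc
  by_cases hall : ∀ p ∈ P, p < a
  · -- append case
    have hstep : signStep n (c, P, Q, a :: t) = (c + 1, P ++ [a], Q ++ [c + 1], t) := by
      simp only [signStep]
      rw [if_pos hall]
    rw [hstep]
    have hPlen : P.length + (a :: t).length = n := hlen
    have htlen : (a :: t).length = t.length + 1 := rfl
    constructor
    · refine ⟨?_, ?_, ?_, ?_, ?_, ?_⟩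
      · simp only [List.length_append, List.length_singleton]
        simp at hlen ⊢; omega
      · have : (P ++ [a]) ++ t = P ++ a :: t := by simp
        rw [this]; exact hnd
      · rw [List.pairwise_append]
        exact ⟨hPs, List.pairwise_singleton _ _, fun x hx y hy => by
          simp at hy; subst hy; exact hall x hx⟩
      · rw [List.pairwise_append]
        exact ⟨hQs, List.pairwise_singleton _ _, fun x hx y hy => by
          simp at hy; subst hy; exact lt_of_le_of_lt (hQc x hx) (by omega)⟩
      · simp [hQlen]
      · intro q hq
        simp only [List.mem_append, List.mem_singleton] at hq
        rcases hq with hq | rfl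
        · exact le_trans (hQc q hq) (by omega)
        · exact le_refl _
    · -- measure
      have hphi : phi (P ++ [a]) t ≤ t.length * (P.length + 1) := by
        have := phi_le (P ++ [a]) t
        simpa using this
      have hP1 : P.length + 1 ≤ n := by simp at hlen; omega
      have ht1 : t.length + 1 ≤ n := by simp at hlen; omega
      simp only [meas, htlen]
      have : t.length * (P.length + 1) ≤ n * n := by nlinarith
      nlinarith [Nat.zero_le (phi P (a :: t))]
  · -- bump case
    have hdisj : ∀ p ∈ P, p % (n : ℤ) ≠ a % (n : ℤ) := by
      intro p hp
      rw [List.map_append, List.nodup_append] at hnd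
      exact fun h => hnd.2.2 _ (List.mem_map_of_mem hp) _ (List.mem_map_of_mem (a := a) (by simp)) h
    have hex : ∃ p ∈ P, a < p := by
      push_neg at hall
      obtain ⟨p, hp, hpa⟩ := hall
      refine ⟨p, hp, lt_of_le_of_ne hpa ?_⟩
      exact fun h => hdisj p hp (by rw [h])
    have hfind : ∃ b, P.find? (fun p => decide (a < p)) = some b := by
      rw [← Option.isSome_iff_exists, List.find?_isSome]
      obtain ⟨p, hp, hap⟩ := hex
      exact ⟨p, hp, by simpa using hap⟩
    obtain ⟨b, hfind⟩ := hfind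
    have hstep : signStep n (c, P, Q, a :: t) =
        (c + 1, P.map (fun x => if x = b then a else x), Q, t ++ [(n : ℤ) + b]) := by
      simp only [signStep]
      rw [if_neg hall, hfind]
    obtain ⟨l1, l2, hPeq, hl1, hab⟩ := find?_structure hfind
    have hab : a < b := by simpa using hab
    have hl1' : ∀ x ∈ l1, x < a := by
      intro x hx
      have h1 : ¬ a < x := by simpa using hl1 x hx
      refine lt_of_le_of_ne (not_lt.mp h1) ?_
      exact fun h => hdisj x (hPeq ▸ (by simp [hx])) (by rw [h])
    have hl2' : ∀ x ∈ l2, b < x := by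
      intro x hx
      rw [hPeq, List.pairwise_append] at hPs
      exact (List.pairwise_cons.mp hPs.2.1).1 x hx
    have hmapP : P.map (fun x => if x = b then a else x) = l1 ++ a :: l2 := by
      rw [hPeq, List.map_append, List.map_cons, if_pos rfl]
      rw [map_eq_self (fun x hx => if_neg (by have := hl1' x hx; omega)),
        map_eq_self (fun x hx => if_neg (by have := hl2' x hx; omega))]
    rw [hstep, hmapP]
    have hcnt_le : ∀ x, cnt (l1 ++ a :: l2) x ≤ cnt P x := by
      intro x
      rw [hPeq, cnt_append, cnt_append, cnt_cons, cnt_cons]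
      have : (if x < a then 1 else 0) ≤ (if x < b then 1 else 0) := by
        split <;> split <;> omega
      omega
    have hcnt_ab : cnt P a ≥ 1 + cnt P b := by
      rw [hPeq, cnt_append, cnt_append, cnt_cons, cnt_cons, if_pos hab, if_neg (lt_irrefl b)]
      have h1 := cnt_anti l1 hab.le
      have h2 := cnt_anti l2 hab.le
      omega
    constructor
    · refine ⟨?_, ?_, ?_, ?_, ?_, ?_⟩
      · simp only [List.length_append, List.length_cons, List.length_singleton]
        rw [hPeq] at hlen; simp at hlen ⊢; omega
      · -- nodup of residues
        have hperm : List.Perm (((l1 ++ a :: l2) ++ (t ++ [(n : ℤ) + b])).map (· % (n : ℤ)))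
            (((P ++ a :: t)).map (· % (n : ℤ))) := by
          rw [hPeq, List.perm_iff_count]
          intro x
          have hb : ((n : ℤ) + b) % (n : ℤ) = b % (n : ℤ) := by simp [Int.add_mul_emod_self_left]
          simp [List.count_append, List.count_cons, hb]
          omega
        exact hperm.nodup_iff.mpr hnd
      · -- sorted new P
        rw [hPeq, List.pairwise_append, List.pairwise_cons] at hPs
        rw [List.pairwise_append, List.pairwise_cons]
        refine ⟨hPs.1, ⟨fun x hx => lt_trans hab (hl2' x hx), hPs.2.1.2⟩, ?_⟩
        intro x hx y hy
        rcases List.mem_cons.mp hy with rfl | hy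
        · exact hl1' x hx
        · exact lt_trans (hl1' x hx) (lt_trans hab (hl2' y hy))
      · exact hQs
      · simp [hQlen, hPeq]
      · exact fun q hq => le_trans (hQc q hq) (by omega)
    · -- measure
      simp only [meas]
      have hphi1 : phi (l1 ++ a :: l2) (t ++ [(n : ℤ) + b]) ≤ phi P t + cnt P b := by
        rw [phi_append]
        have h1 : phi (l1 ++ a :: l2) t ≤ phi P t := phi_mono _ _ _ hcnt_le
        have h2 : phi (l1 ++ a :: l2) [(n : ℤ) + b] ≤ cnt P b := by
          simp only [phi, List.map_cons, List.map_nil, List.sum_cons, List.sum_nil, Nat.add_zero]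
          exact le_trans (hcnt_le _) (cnt_anti P (by omega))
        omega
      have hphi2 : phi P (a :: t) = cnt P a + phi P t := phi_cons P a t
      have hlen' : (t ++ [(n : ℤ) + b]).length = (a :: t).length := by simp
      rw [hlen']
      omega

lemma signStep_fix (n : ℕ) (s : ℤ × List ℤ × List ℤ × List ℤ) (h : s.2.2.2 = []) :
    signStep n s = s := by
  obtain ⟨c, P, Q, word⟩ := s
  simp only at h
  subst h
  rfl

lemma iterate_fix (n k : ℕ) (s : ℤ × List ℤ × List ℤ × List ℤ) (h : s.2.2.2 = []) :
    (signStep n)^[k] s = s := by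
  induction k with
  | zero => rfl
  | succ k ih => rw [Function.iterate_succ_apply, signStep_fix n s h, ih]

lemma terminate (n : ℕ) (hn : 0 < n) :
    ∀ (k : ℕ) (s : ℤ × List ℤ × List ℤ × List ℤ), Inv n s → meas n s ≤ k →
      ((signStep n)^[k] s).2.2.2 = [] ∧ Inv n ((signStep n)^[k] s) := by
  intro k
  induction k with
  | zero =>
    intro s hI hm
    have hlen : s.2.2.2.length = 0 := by
      have : s.2.2.2.length * (n * n + 1) ≤ 0 := le_trans (Nat.le_add_right _ _) hm
      by_contra h
      have : 1 ≤ s.2.2.2.length := Nat.one_le_iff_ne_zero.mpr h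
      nlinarith
    exact ⟨List.length_eq_zero_iff.mp hlen, hI⟩
  | succ k ih =>
    intro s hI hm
    by_cases h : s.2.2.2 = []
    · rw [iterate_fix n _ s h]; exact ⟨h, hI⟩
    · obtain ⟨hI', hlt⟩ := step_main n hn s hI h
      rw [Function.iterate_succ_apply]
      exact ih _ hI' (by omega)

end SignAux

theorem stmt10 (n : ℕ) (hn : 0 < n) (w : Equiv.Perm ℤ)
    (hw : ∀ i : ℤ, w (i + n) = w i + n) :
    ∃ N : ℕ,
      (((signStep n)^[N] ((0 : ℤ), [], [], (List.range n).map (fun j => w ((j : ℤ) + 1)))).2.2.2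
        = []) ∧
      List.Pairwise (· < ·)
        ((signStep n)^[N] ((0 : ℤ), [], [], (List.range n).map (fun j => w ((j : ℤ) + 1)))).2.1 ∧
      ((signStep n)^[N] ((0 : ℤ), [], [], (List.range n).map (fun j => w ((j : ℤ) + 1)))).2.1.length
        = n ∧
      List.Pairwise (· < ·)
        ((signStep n)^[N] ((0 : ℤ), [], [], (List.range n).map (fun j => w ((j : ℤ) + 1)))).2.2.1 ∧
      ((signStep n)^[N]
        ((0 : ℤ), [], [], (List.range n).map (fun j => w ((j : ℤ) + 1)))).2.2.1.length = n := by
  classical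
  have hword : ((List.range n).map (fun j => w ((j : ℤ) + 1))) =
      (List.range n).map (fun a : ℕ => w ((a : ℤ) + 1)) := by
    induction List.range n with
    | nil => rfl
    | cons a t ih => simpa using ih
  rw [hword]
  set s0 : ℤ × List ℤ × List ℤ × List ℤ :=
    ((0 : ℤ), [], [], (List.range n).map (fun a : ℕ => w ((a : ℤ) + 1))) with hs0
  have key : ∀ (i k : ℤ), w (i + k * n) = w i + k * n := by
    intro i k
    induction k using Int.induction_on with
    | zero => simp
    | succ m ih =>
      rw [show i + ((m : ℤ) + 1) * n = (i + m * n) + n by ring, hw, ih]; ring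
    | pred m ih =>
      have h2 : ∀ x : ℤ, w (x - n) = w x - n := by
        intro x
        have := hw (x - n)
        have hx : x - (n : ℤ) + n = x := by ring
        rw [hx] at this
        omega
      rw [show i + (-(m : ℤ) - 1) * n = (i + -(m : ℤ) * n) - n by ring, h2, ih]; ring
  have hinj : ∀ x y : ℤ, (w x) % (n : ℤ) = (w y) % (n : ℤ) → (n : ℤ) ∣ y - x := by
    intro x y h
    have hd : (n : ℤ) ∣ w y - w x := Int.ModEq.dvd h
    obtain ⟨k, hk⟩ := hd
    have h1 : w (x + k * n) = w y := by
      rw [key]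
      have := mul_comm k (n : ℤ)
      linarith
    have h2 : x + k * (n : ℤ) = y := w.injective h1
    exact ⟨k, by linarith [mul_comm k (n : ℤ)]⟩
  have hInv0 : SignAux.Inv n s0 := by
    refine ⟨by simp [hs0], ?_, by simp [hs0], by simp [hs0],
      by simp [hs0], by simp [hs0]⟩
    simp only [hs0, List.nil_append, List.map_map]
    apply List.Nodup.map_on ?_ List.nodup_range
    intro x hx y hy hxy
    simp only [Function.comp_apply] at hxy
    have hd := hinj ((x : ℤ) + 1) ((y : ℤ) + 1) hxy
    simp only [List.mem_range] at hx hy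
    have : ((y : ℤ) + 1) - ((x : ℤ) + 1) = 0 := by
      refine Int.eq_zero_of_abs_lt_dvd hd ?_
      rw [abs_lt]
      omega
    omega
  obtain ⟨hempty, hInv⟩ := SignAux.terminate n hn (SignAux.meas n s0) s0 hInv0 le_rfl
  refine ⟨SignAux.meas n s0, hempty, hInv.2.2.1, ?_, hInv.2.2.2.1, ?_⟩
  · have := hInv.1
    rw [hempty] at this
    simpa using this
  · have h1 := hInv.2.2.2.2.1
    have := hInv.1
    rw [hempty] at this
    simp at this
    omega
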